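/- Let G be a finite graph, let r ≥ 1 and t ≥ 2 be integers, and suppose every ball of radius r in G is t-connected. Then for every integer r' > r, every ball of radius r' in G is t-connected. -/

import Mathlib

open SimpleGraph

/-- The graph `G` belongs to the class 𝒢(k): it is connected, `k`-regular, and every vertex has
at most `k` vertices at distance exactly `2`. (Finiteness is imposed via `Fintype` on vertices.) -/
def InGClass {V : Type*} (G : SimpleGraph V) (k : ℕ) : Prop :=
  G.Connected ∧ (∀ v : V, (G.neighborSet v).ncard = k) ∧
    ∀ u : V, {v : V | G.dist u v = 2}.ncard ≤ k

/-- A graph is `t`-connected if it has more than `t` vertices and stays connected after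
deleting any set of fewer than `t` vertices. -/
def IsTConnectedGraph {V : Type*} (G : SimpleGraph V) (t : ℕ) : Prop :=
  t < Nat.card V ∧ ∀ s : Set V, s.ncard < t → (G.induce sᶜ).Connected

/-- A graph is locally connected if every neighborhood induces a connected subgraph. -/
def GraphLocallyConnected {V : Type*} (G : SimpleGraph V) : Prop :=
  ∀ v : V, (G.induce (G.neighborSet v)).Connected

/-- A graph is claw-free if it has no induced subgraph isomorphic to `K_{1,3}`. -/
def GraphClawFree {V : Type*} (G : SimpleGraph V) : Prop :=
  IsEmpty (completeBipartiteGraph (Fin 1) (Fin 3) ↪g G)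

section Aux
variable {V : Type*} {G : SimpleGraph V}

/-- There is a walk from `x` to `y` in `G` whose support stays inside `D`. -/
def GoodConn (G : SimpleGraph V) (D : Set V) (x y : V) : Prop :=
  ∃ w : G.Walk x y, ∀ z ∈ w.support, z ∈ D

lemma GoodConn.mono {D D' : Set V} (h : D ⊆ D') {x y : V} (hg : GoodConn G D x y) :
    GoodConn G D' x y := by
  obtain ⟨w, hw⟩ := hg
  exact ⟨w, fun z hz => h (hw z hz)⟩

lemma GoodConn.refl {D : Set V} {x : V} (hx : x ∈ D) : GoodConn G D x x :=
  ⟨Walk.nil, by simp [hx]⟩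

lemma GoodConn.symm {D : Set V} {x y : V} (hg : GoodConn G D x y) : GoodConn G D y x := by
  obtain ⟨w, hw⟩ := hg
  exact ⟨w.reverse, fun z hz => hw z (by simpa [Walk.support_reverse] using hz)⟩

lemma GoodConn.trans {D : Set V} {x y z : V} (h1 : GoodConn G D x y) (h2 : GoodConn G D y z) :
    GoodConn G D x z := by
  obtain ⟨w1, hw1⟩ := h1
  obtain ⟨w2, hw2⟩ := h2
  refine ⟨w1.append w2, fun a ha => ?_⟩
  rcases (Walk.mem_support_append_iff _ _).1 ha with h | h
  · exact hw1 a h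
  · exact hw2 a h

lemma reachable_induce_of_walk {D : Set V} :
    ∀ {x y : V} (w : G.Walk x y), (∀ z ∈ w.support, z ∈ D) →
      ∀ (hx : x ∈ D) (hy : y ∈ D), (G.induce D).Reachable ⟨x, hx⟩ ⟨y, hy⟩ := by
  intro x y w
  induction w with
  | nil => intro _ hx hy; exact Reachable.refl _
  | @cons a b c h p ih =>
    intro hsup hx hy
    have hb : b ∈ D := hsup b (by simp [Walk.support_cons])
    have step : (G.induce D).Adj ⟨a, hx⟩ ⟨b, hb⟩ := by
      simpa [comap_adj] using h
    exact (step.reachable).trans (ih (fun z hz => hsup z (by simp [Walk.support_cons, hz])) hb hy)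

lemma goodConn_of_reachable {D : Set V} {x y : ↥D}
    (h : (G.induce D).Reachable x y) : GoodConn G D x.1 y.1 := by
  obtain ⟨w⟩ := h
  refine ⟨w.map (Embedding.induce D).toHom, fun z hz => ?_⟩
  erw [Walk.support_map] at hz
  obtain ⟨a, _, rfl⟩ := List.mem_map.1 hz
  exact a.2

lemma induce_connected_iff' {D : Set V} :
    (G.induce D).Connected ↔ D.Nonempty ∧ ∀ x ∈ D, ∀ y ∈ D, GoodConn G D x y := by
  constructor
  · intro h
    refine ⟨?_, fun x hx y hy => ?_⟩
    · obtain ⟨⟨v, hv⟩⟩ := h.nonempty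
      exact ⟨v, hv⟩
    · exact goodConn_of_reachable (h.preconnected ⟨x, hx⟩ ⟨y, hy⟩)
  · rintro ⟨⟨v, hv⟩, hgood⟩
    rw [connected_iff]
    refine ⟨?_, ⟨⟨v, hv⟩⟩⟩
    rintro ⟨x, hx⟩ ⟨y, hy⟩
    obtain ⟨w, hw⟩ := hgood x hx y hy
    exact reachable_induce_of_walk w hw hx hy

/-- `(G.induce A).induce sᶜ` is isomorphic to `G.induce (A \ ↑s)`. -/
def induceComplIso (A : Set V) (s : Set ↥A) :
    ((G.induce A).induce sᶜ) ≃g (G.induce (A \ (Subtype.val '' s))) where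
  toFun := fun x => ⟨x.1.1, x.1.2, by
    rintro ⟨a, ha, hav⟩
    exact x.2 (by rwa [show a = x.1 from Subtype.ext hav] at ha)⟩
  invFun := fun y => ⟨⟨y.1, y.2.1⟩, fun hm => y.2.2 ⟨⟨y.1, y.2.1⟩, hm, rfl⟩⟩
  left_inv := fun x => rfl
  right_inv := fun y => rfl
  map_rel_iff' := Iff.rfl

lemma isTConnected_induce_iff [Fintype V] {t : ℕ} (A : Set V) :
    IsTConnectedGraph (G.induce A) t ↔
      (t < A.ncard ∧ ∀ S : Set V, S.ncard < t → (G.induce (A \ S)).Connected) := by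
  constructor
  · rintro ⟨h1, h2⟩
    refine ⟨by rwa [Nat.card_coe_set_eq] at h1, fun S hS => ?_⟩
    have hs : (Subtype.val ⁻¹' S : Set ↥A).ncard < t := by
      have h3 : (Subtype.val '' (Subtype.val ⁻¹' S : Set ↥A)).ncard ≤ S.ncard :=
        Set.ncard_le_ncard (Set.image_preimage_subset _ _) (Set.toFinite S)
      rw [Set.ncard_image_of_injective _ Subtype.val_injective] at h3
      exact lt_of_le_of_lt h3 hS
    have hc := h2 _ hs
    have hiso := (induceComplIso A (Subtype.val ⁻¹' S)).connected_iff.1 hc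
    have hset : A \ (Subtype.val '' (Subtype.val ⁻¹' S : Set ↥A)) = A \ S := by
      rw [Subtype.image_preimage_coe, Set.diff_self_inter]
    rwa [hset] at hiso
  · rintro ⟨h1, h2⟩
    refine ⟨by rwa [Nat.card_coe_set_eq], fun s hs => ?_⟩
    have hS : (Subtype.val '' s).ncard < t := by
      rwa [Set.ncard_image_of_injective _ Subtype.val_injective]
    exact (induceComplIso A s).connected_iff.2 (h2 _ hS)

end Aux

section Step
variable {V : Type*} {G : SimpleGraph V} {t : ℕ}

lemma ball_subset_succ (u : V) (ρ : ℕ) :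
    {x : V | G.dist u x ≤ ρ} ⊆ {x : V | G.dist u x ≤ ρ + 1} :=
  fun x hx => le_trans hx (Nat.le_succ ρ)

lemma step_lemma [Fintype V] (hG : G.Connected) (ρ : ℕ) (hρ : 1 ≤ ρ)
    (IHc : ∀ u : V, t < {x : V | G.dist u x ≤ ρ}.ncard)
    (IH : ∀ (u : V) (S : Set V), S.ncard < t →
      (G.induce ({x : V | G.dist u x ≤ ρ} \ S)).Connected) :
    (∀ u : V, t < {x : V | G.dist u x ≤ ρ + 1}.ncard) ∧
    ∀ (u : V) (S : Set V), S.ncard < t →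
      (G.induce ({x : V | G.dist u x ≤ ρ + 1} \ S)).Connected := by
  classical
  constructor
  · intro u
    exact lt_of_lt_of_le (IHc u)
      (Set.ncard_le_ncard (ball_subset_succ u ρ) (Set.toFinite _))
  · intro u S hS
    have hTne : ({x : V | G.dist u x ≤ ρ} \ S).Nonempty := by
      rw [Set.nonempty_iff_ne_empty]
      intro hemp
      have hsub : {x : V | G.dist u x ≤ ρ} ⊆ S := by
        intro z hz
        by_contra hzS
        exact (Set.eq_empty_iff_forall_notMem.1 hemp z) ⟨hz, hzS⟩
      have h2 := Set.ncard_le_ncard hsub (Set.toFinite S)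
      have h1 := IHc u
      omega
    have hTD : ({x : V | G.dist u x ≤ ρ} \ S) ⊆ ({x : V | G.dist u x ≤ ρ + 1} \ S) :=
      fun z hz => ⟨ball_subset_succ u ρ hz.1, hz.2⟩
    have hTgood := (induce_connected_iff' (G := G)).1 (IH u S hS)
    have key : ∀ x ∈ ({x : V | G.dist u x ≤ ρ + 1} \ S), ∃ y ∈ ({x : V | G.dist u x ≤ ρ} \ S),
        GoodConn G ({x : V | G.dist u x ≤ ρ + 1} \ S) x y := by
      intro x hx
      rcases le_or_gt (G.dist u x) ρ with hle | hgt
      · exact ⟨x, ⟨hle, hx.2⟩, GoodConn.refl hx⟩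
      · have hdx : G.dist u x = ρ + 1 := le_antisymm hx.1 hgt
        obtain ⟨w, hw⟩ := hG.exists_walk_length_eq_dist u x
        rw [hdx] at hw
        cases w with
        | nil => simp at hw
        | @cons _ v _ hadj w' =>
          rw [Walk.length_cons] at hw
          have hw' : w'.length = ρ := Nat.succ_injective hw
          have hduv : G.dist u v ≤ 1 := by
            have := dist_le (Walk.cons hadj Walk.nil)
            simpa using this
          have hdvu : G.dist v u ≤ 1 := by
            have := dist_le (Walk.cons hadj.symm Walk.nil)
            simpa using this
          have hAB : {z : V | G.dist v z ≤ ρ} ⊆ {x : V | G.dist u x ≤ ρ + 1} := by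
            intro z hz
            have h3 := hG.dist_triangle (u := u) (v := v) (w := z)
            have h4 : G.dist v z ≤ ρ := hz
            simp only [Set.mem_setOf_eq]
            omega
          have hxA : x ∈ {z : V | G.dist v z ≤ ρ} := by
            have h5 := dist_le w'
            simp only [Set.mem_setOf_eq]
            omega
          have huA : u ∈ {z : V | G.dist v z ≤ ρ} := by
            simp only [Set.mem_setOf_eq]
            omega
          by_cases hu : u ∈ S
          · have hS'lt : (S \ {u}).ncard < t :=
              lt_of_le_of_lt (Set.ncard_le_ncard Set.diff_subset (Set.toFinite S)) hS
            have hAconn := (induce_connected_iff' (G := G)).1 (IH v (S \ {u}) hS'lt)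
            have hxAS : x ∈ {z : V | G.dist v z ≤ ρ} \ (S \ {u}) := ⟨hxA, fun h => hx.2 h.1⟩
            have huAS : u ∈ {z : V | G.dist v z ≤ ρ} \ (S \ {u}) :=
              ⟨huA, fun h => h.2 rfl⟩
            obtain ⟨w2, hw2⟩ := hAconn.2 x hxAS u huAS
            have hxu : u ≠ x := fun h => hx.2 (h ▸ hu)
            obtain ⟨y, hadj2, q, hq0⟩ := Walk.exists_eq_cons_of_ne hxu (w2.toPath.1.reverse)
            have hq0path : (w2.toPath.1.reverse).IsPath := w2.toPath.2.reverse
            have hq0sup : ∀ z ∈ w2.toPath.1.reverse.support, z ∈ {z : V | G.dist v z ≤ ρ} \ (S \ {u}) := by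
              intro z hz
              rw [Walk.support_reverse, List.mem_reverse] at hz
              exact hw2 z (Walk.support_toPath_subset w2 hz)
            rw [hq0] at hq0path hq0sup
            have hunotq : u ∉ q.support := ((Walk.cons_isPath_iff hadj2 q).1 hq0path).2
            have hyT : y ∈ ({x : V | G.dist u x ≤ ρ} \ S) := by
              constructor
              · have h6 : G.dist u y ≤ 1 := by
                  have := dist_le (Walk.cons hadj2 Walk.nil)
                  simpa using this
                simp only [Set.mem_setOf_eq]
                omega
              · have hyAS : y ∈ {z : V | G.dist v z ≤ ρ} \ (S \ {u}) :=
                  hq0sup y (by simp [Walk.support_cons])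
                intro hyS
                exact hyAS.2 ⟨hyS, fun h => hadj2.ne' (by simpa using h)⟩
            refine ⟨y, hyT, GoodConn.symm ⟨q, fun z hz => ?_⟩⟩
            have hzAS : z ∈ {z : V | G.dist v z ≤ ρ} \ (S \ {u}) :=
              hq0sup z (by simp [Walk.support_cons, hz])
            have hzu : z ≠ u := fun h => hunotq (h ▸ hz)
            exact ⟨hAB hzAS.1, fun hzS => hzAS.2 ⟨hzS, hzu⟩⟩
          · have hAconn := (induce_connected_iff' (G := G)).1 (IH v S hS)
            have hxAS : x ∈ {z : V | G.dist v z ≤ ρ} \ S := ⟨hxA, hx.2⟩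
            have huAS : u ∈ {z : V | G.dist v z ≤ ρ} \ S := ⟨huA, hu⟩
            obtain ⟨w2, hw2⟩ := hAconn.2 x hxAS u huAS
            have huT : u ∈ ({x : V | G.dist u x ≤ ρ} \ S) := by
              refine ⟨?_, hu⟩
              simp only [Set.mem_setOf_eq, SimpleGraph.dist_self]
              omega
            exact ⟨u, huT, ⟨w2, fun z hz => ⟨hAB (hw2 z hz).1, (hw2 z hz).2⟩⟩⟩
    rw [induce_connected_iff']
    refine ⟨hTne.mono hTD, fun x hx y hy => ?_⟩
    obtain ⟨a, haT, hga⟩ := key x hx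
    obtain ⟨b, hbT, hgb⟩ := key y hy
    exact hga.trans (((hTgood.2 a haT b hbT).mono hTD).trans hgb.symm)

end Step


/-- If every ball of radius `r ≥ 1` in a finite graph `G` is `t`-connected
(`t ≥ 2`), then for every `r' > r` every ball of radius `r'` is `t`-connected. -/
theorem stmt_3 {V : Type*} [Fintype V] (G : SimpleGraph V) (r t : ℕ) (hr : 1 ≤ r) (ht : 2 ≤ t)
    (hball : ∀ u : V, IsTConnectedGraph (G.induce {x : V | G.dist u x ≤ r}) t) :
    ∀ r' : ℕ, r < r' → ∀ u : V, IsTConnectedGraph (G.induce {x : V | G.dist u x ≤ r'}) t := by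
  intro r' hr' u
  have hcball : ∀ w : V, (G.induce {x : V | G.dist w x ≤ r}).Connected := by
    intro w
    have h0 := (hball w).2 ∅ (by
      rw [Set.ncard_empty]; omega)
    rw [Set.compl_empty] at h0
    exact (induceUnivIso _).connected_iff.1 h0
  have hconn : G.Connected := by
    have hreach : ∀ x : V, G.Reachable u x := by
      intro x
      by_contra hnr
      have hd : G.dist u x = 0 := dist_eq_zero_of_not_reachable hnr
      have hxB : x ∈ {y : V | G.dist u y ≤ r} := by
        simp only [Set.mem_setOf_eq]; omega
      have huB : u ∈ {y : V | G.dist u y ≤ r} := by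
        simp only [Set.mem_setOf_eq, SimpleGraph.dist_self]; omega
      obtain ⟨w, _⟩ := (induce_connected_iff'.1 (hcball u)).2 u huB x hxB
      exact hnr ⟨w⟩
    exact (connected_iff G).2 ⟨fun a b => (hreach a).symm.trans (hreach b), ⟨u⟩⟩
  have main : ∀ ρ : ℕ, r ≤ ρ →
      (∀ w : V, t < {x : V | G.dist w x ≤ ρ}.ncard) ∧
      ∀ (w : V) (S : Set V), S.ncard < t →
        (G.induce ({x : V | G.dist w x ≤ ρ} \ S)).Connected := by
    intro ρ hρ
    induction ρ, hρ using Nat.le_induction with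
    | base =>
      exact ⟨fun w => ((isTConnected_induce_iff _).1 (hball w)).1,
        fun w S hS => ((isTConnected_induce_iff _).1 (hball w)).2 S hS⟩
    | succ n hn ih => exact step_lemma hconn n (le_trans hr hn) ih.1 ih.2
  exact (isTConnected_induce_iff _).2
    ⟨(main r' hr'.le).1 u, fun S hS => (main r' hr'.le).2 u S hS⟩
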